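/- Let R be a commutative unitary ring with finitely many ideals and M a maximal ideal of R such that Ann(M) ≠ (0). Then there exists a minimal nonzero ideal J of R with M = Ann(J). -/

import Mathlib

theorem maximal_is_annihilator_of_minimal (R : Type*) [CommRing R] [Finite (Ideal R)]
    (M : Ideal R) (hM : M.IsMaximal) (hAnn : M.annihilator ≠ ⊥) :
    ∃ J : Ideal R, J ≠ ⊥ ∧ (∀ K : Ideal R, K ≠ ⊥ → K ≤ J → K = J) ∧
      M = J.annihilator := by
  have hS : {J : Ideal R | J ≠ ⊥ ∧ J ≤ M.annihilator}.Finite := Set.toFinite _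
  obtain ⟨J, hJmem, hmin⟩ := hS.exists_minimal
    ⟨M.annihilator, hAnn, le_refl _⟩
  obtain ⟨hJne, hJle⟩ := hJmem
  refine ⟨J, hJne, ?_, ?_⟩
  · intro K hKne hKJ
    exact le_antisymm hKJ (hmin ⟨hKne, hKJ.trans hJle⟩ hKJ)
  · have hle : M ≤ J.annihilator := by
      intro m hm
      rw [Submodule.mem_annihilator]
      intro j hj
      have := Submodule.mem_annihilator.mp (hJle hj) m hm
      simpa [smul_eq_mul, mul_comm] using this
    have hne : J.annihilator ≠ ⊤ := by
      intro h
      apply hJne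
      ext x
      simp only [Submodule.mem_bot]
      constructor
      · intro hx
        have : (1 : R) ∈ J.annihilator := h ▸ Submodule.mem_top
        simpa using Submodule.mem_annihilator.mp this x hx
      · rintro rfl; exact J.zero_mem
    exact hM.eq_of_le hne hle
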